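/- There exists a constant c > 0 such that the following holds. Suppose G, H, W, k, n satisfy Assumption (★) with constant c. Then for every integer x ≥ 2, every simple arc-system 𝒜 in G of length at least 2x and size at least 2x is such that G[𝒜] contains an independent set of size at least x² + 1. -/

import Mathlib

open Finset

/-- `σ` lists the vertices of `G` in the order of a Hamilton cycle `H`:
it is a bijection from `ZMod n` such that consecutive indices give adjacent vertices. -/
def IsHamOrder {V : Type} [Fintype V] (G : SimpleGraph V) (n : ℕ) (σ : ZMod n → V) : Prop :=
  Function.Bijective σ ∧ ∀ i : ZMod n, G.Adj (σ i) (σ (i + 1))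

/-- A vertex is problematic if it has degree at most `2k` or belongs to `W`. -/
def Problematic {V : Type} [Fintype V] [DecidableEq V] (G : SimpleGraph V)
    [DecidableRel G.Adj] (W : Finset V) (k : ℕ) (v : V) : Prop :=
  G.degree v ≤ 2 * k ∨ v ∈ W

/-- `G` has a cycle of length `ℓ` passing through all vertices of `S`. -/
def HasCycleThrough {V : Type} (G : SimpleGraph V) (ℓ : ℕ) (S : Set V) : Prop :=
  ∃ (u : V) (w : G.Walk u u), w.IsCycle ∧ w.length = ℓ ∧ ∀ x ∈ S, x ∈ w.support

/-- Assumption (★) with constant `c`: `G` is a graph on `n` vertices with Hamilton cycle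
(order) `σ`, independence number at most `k`, `W` has at most `20k²` vertices, `G` has no
cycle of length `n − 1` through all of `W`, and `n ≥ c·k^(11/5)`. -/
def StarAssumption {V : Type} [Fintype V] [DecidableEq V] (G : SimpleGraph V) [DecidableRel G.Adj]
    (n k : ℕ) (σ : ZMod n → V) (W : Finset V) (c : ℝ) : Prop :=
  Fintype.card V = n ∧ IsHamOrder G n σ ∧
  (∀ s : Finset V, (∀ u ∈ s, ∀ v ∈ s, u ≠ v → ¬ G.Adj u v) → s.card ≤ k) ∧
  W.card ≤ 20 * k ^ 2 ∧
  ¬ HasCycleThrough G (n - 1) (W : Set V) ∧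
  c * (k : ℝ) ^ ((11 : ℝ) / 5) ≤ (n : ℝ)

/-- Two vertices are consecutive if they are neighbours on the Hamilton cycle. -/
def Consec {V : Type} (n : ℕ) (σ : ZMod n → V) (u v : V) : Prop :=
  ∃ i : ZMod n, (σ i = u ∧ σ (i + 1) = v) ∨ (σ i = v ∧ σ (i + 1) = u)

/-- A continuous set of vertices: one forming a subpath (interval) of the Hamilton cycle. -/
def ContinuousSet {V : Type} [DecidableEq V] (n : ℕ) (σ : ZMod n → V) (S : Finset V) : Prop :=
  ∃ (i : ZMod n) (m : ℕ), S = (Finset.range m).image (fun j : ℕ => σ (i + (j : ZMod n)))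

/-- `B` is a continuous closure of `A`: a minimum-size continuous set containing `A`. -/
def IsClosure {V : Type} [DecidableEq V] (n : ℕ) (σ : ZMod n → V) (A B : Finset V) : Prop :=
  ContinuousSet n σ B ∧ A ⊆ B ∧
    ∀ B' : Finset V, ContinuousSet n σ B' → A ⊆ B' → B.card ≤ B'.card

/-- An arc-system: a family of arcs together with a choice of continuous closure for each
arc, such that closures of distinct arcs are disjoint, closures contain no problematic
vertex, and no arc contains two consecutive vertices. -/
structure ArcSystem {V : Type} [Fintype V] [DecidableEq V] (G : SimpleGraph V)
    [DecidableRel G.Adj] (n k : ℕ) (σ : ZMod n → V) (W : Finset V) where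
  arcs : Finset (Finset V)
  cl : Finset V → Finset V
  closure_spec : ∀ A ∈ arcs, IsClosure n σ A (cl A)
  closures_disjoint : ∀ A ∈ arcs, ∀ B ∈ arcs, A ≠ B → Disjoint (cl A) (cl B)
  no_problematic : ∀ A ∈ arcs, ∀ v ∈ cl A, ¬ Problematic G W k v
  no_consec : ∀ A ∈ arcs, ∀ u ∈ A, ∀ v ∈ A, u ≠ v → ¬ Consec n σ u v

namespace ArcSystem

variable {V : Type} [Fintype V] [DecidableEq V] {G : SimpleGraph V} [DecidableRel G.Adj]
  {n k : ℕ} {σ : ZMod n → V} {W : Finset V}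

/-- An arc-system is independent if every closure has at most `k` vertices. -/
def Independent (𝒜 : ArcSystem G n k σ W) : Prop :=
  ∀ A ∈ 𝒜.arcs, (𝒜.cl A).card ≤ k

/-- Every arc of the system has at least `l` vertices. -/
def LengthGe (𝒜 : ArcSystem G n k σ W) (l : ℕ) : Prop :=
  ∀ A ∈ 𝒜.arcs, l ≤ A.card

end ArcSystem

/-- A vertex set `s` is `M₂`-free (for `G`) if the subgraph induced by `s`
contains no two vertex-disjoint edges. -/
def M2Free {V : Type} (G : SimpleGraph V) (s : Finset V) : Prop :=
  ¬ ∃ a b x y : V, a ∈ s ∧ b ∈ s ∧ x ∈ s ∧ y ∈ s ∧ G.Adj a b ∧ G.Adj x y ∧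
      a ≠ x ∧ a ≠ y ∧ b ≠ x ∧ b ≠ y

namespace ArcSystem

variable {V : Type} [Fintype V] [DecidableEq V] {G : SimpleGraph V} [DecidableRel G.Adj]
  {n k : ℕ} {σ : ZMod n → V} {W : Finset V}

/-- An arc-system is simple if it is independent and any two distinct arcs induce an
`M₂`-free subgraph of `G`. -/
def Simple (𝒜 : ArcSystem G n k σ W) : Prop :=
  𝒜.Independent ∧ ∀ A ∈ 𝒜.arcs, ∀ B ∈ 𝒜.arcs, A ≠ B → M2Free G (A ∪ B)

end ArcSystem

/-- `G[𝒜]` contains an independent set of size at least `m`. -/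
def HasIndepInArcs {V : Type} [Fintype V] [DecidableEq V] (G : SimpleGraph V)
    [DecidableRel G.Adj] {n k : ℕ} {σ : ZMod n → V} {W : Finset V}
    (𝒜 : ArcSystem G n k σ W) (m : ℕ) : Prop :=
  ∃ I : Finset V, (∀ v ∈ I, ∃ A ∈ 𝒜.arcs, v ∈ A) ∧
    (∀ u ∈ I, ∀ v ∈ I, u ≠ v → ¬ G.Adj u v) ∧ m ≤ I.card

/-- The constants `a_p = 10·3^p`. -/
def aP (p : ℕ) : ℕ := 10 * 3 ^ p

/-- The constants `b_p = 1000^p·4^(p²)`. -/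
def bP (p : ℕ) : ℕ := 1000 ^ p * 4 ^ (p ^ 2)

/-- Any two cross edges between disjoint `M₂`-free parts intersect. -/
lemma cross_intersect {V : Type} [DecidableEq V] {G : SimpleGraph V} {A B : Finset V}
    (hd : Disjoint A B) (hm : M2Free G (A ∪ B)) :
    ∀ a ∈ A, ∀ b ∈ B, G.Adj a b → ∀ u ∈ A, ∀ v ∈ B, G.Adj u v → u = a ∨ v = b := by
  intro a ha b hb hab u hu v hv huv
  by_contra hcon
  push_neg at hcon
  have hd' := Finset.disjoint_left.mp hd
  exact hm ⟨a, b, u, v, Finset.mem_union_left _ ha, Finset.mem_union_right _ hb,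
    Finset.mem_union_left _ hu, Finset.mem_union_right _ hv, hab, huv,
    fun h => hcon.1 h.symm,
    fun h => hd' ha (h ▸ hv),
    fun h => hd' hu (h ▸ hb),
    fun h => hcon.2 h.symm⟩

/-- All cross edges between disjoint `M₂`-free parts pass through a common vertex. -/
lemma star_center {V : Type} [DecidableEq V] (G : SimpleGraph V) (A B : Finset V)
    (hd : Disjoint A B) (hm : M2Free G (A ∪ B)) (v0 : V) :
    ∃ c : V, ∀ u ∈ A, ∀ v ∈ B, G.Adj u v → u = c ∨ v = c := by
  by_cases hE : ∃ a, a ∈ A ∧ ∃ b, b ∈ B ∧ G.Adj a b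
  · obtain ⟨a, ha, b, hb, hab⟩ := hE
    by_cases hall : ∀ u ∈ A, ∀ v ∈ B, G.Adj u v → u = a
    · exact ⟨a, fun u hu v hv huv => Or.inl (hall u hu v hv huv)⟩
    · push_neg at hall
      obtain ⟨u, hu, v, hv, huv, hua⟩ := hall
      have hvb : v = b :=
        (cross_intersect hd hm a ha b hb hab u hu v hv huv).resolve_left hua
      subst hvb
      refine ⟨v, fun p hp q hq hpq => ?_⟩
      rcases cross_intersect hd hm a ha v hb hab p hp q hq hpq with h1 | h1
      · rcases cross_intersect hd hm u hu v hb huv p hp q hq hpq with h2 | h2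
        · exact absurd (h2.symm.trans h1) hua
        · exact Or.inr h2
      · exact Or.inr h1
  · exact ⟨v0, fun u hu v hv huv => absurd ⟨u, hu, v, hv, huv⟩ hE⟩

open Classical in
/-- A choice of common vertex for cross edges. -/
noncomputable def starCtr {V : Type} (G : SimpleGraph V) (v0 : V) (A B : Finset V) : V :=
  if h : ∃ c : V, ∀ u ∈ A, ∀ v ∈ B, G.Adj u v → u = c ∨ v = c then h.choose else v0

lemma starCtr_spec {V : Type} (G : SimpleGraph V) (v0 : V) {A B : Finset V}
    (h : ∃ c : V, ∀ u ∈ A, ∀ v ∈ B, G.Adj u v → u = c ∨ v = c) :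
    ∀ u ∈ A, ∀ v ∈ B, G.Adj u v → u = starCtr G v0 A B ∨ v = starCtr G v0 A B := by
  unfold starCtr
  rw [dif_pos h]
  exact h.choose_spec

/-- There is a constant `c > 0` such that under Assumption (★) with
constant `c`: for every integer `x ≥ 2`, every simple arc-system of length at least `2x`
and size at least `2x` yields an independent set of size at least `x² + 1` in `G[𝒜]`. -/
theorem statement9 :
    ∃ c : ℝ, 0 < c ∧
      ∀ (V : Type) [Fintype V] [DecidableEq V] (G : SimpleGraph V) [DecidableRel G.Adj]
        (n k : ℕ) (σ : ZMod n → V) (W : Finset V),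
        StarAssumption G n k σ W c →
        ∀ x : ℕ, 2 ≤ x →
          ∀ 𝒜 : ArcSystem G n k σ W,
            𝒜.Simple → 𝒜.LengthGe (2 * x) → 2 * x ≤ 𝒜.arcs.card →
            HasIndepInArcs G 𝒜 (x ^ 2 + 1) := by
  classical
  refine ⟨1, one_pos, ?_⟩
  intro V _ _ G _ n k σ W _hstar x hx 𝒜 hsimple hlen hsize
  obtain ⟨_hindep, hM2⟩ := hsimple
  -- arcs are pairwise disjoint
  have hdisj : ∀ A ∈ 𝒜.arcs, ∀ B ∈ 𝒜.arcs, A ≠ B → Disjoint A B := by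
    intro A hA B hB hAB
    exact (𝒜.closures_disjoint A hA B hB hAB).mono
      (𝒜.closure_spec A hA).2.1 (𝒜.closure_spec B hB).2.1
  -- at most one arc contains an edge inside it
  set P : Finset V → Prop := fun A => ∃ u ∈ A, ∃ v ∈ A, G.Adj u v with hPdef
  have hT : (𝒜.arcs.filter P).card ≤ 1 := by
    rw [Finset.card_le_one]
    intro A hA B hB
    by_contra hAB
    rw [Finset.mem_filter] at hA hB
    obtain ⟨hA, u1, hu1, v1, hv1, h1⟩ := hA
    obtain ⟨hB, u2, hu2, v2, hv2, h2⟩ := hB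
    have hd' := Finset.disjoint_left.mp (hdisj A hA B hB hAB)
    exact hM2 A hA B hB hAB ⟨u1, v1, u2, v2, Finset.mem_union_left _ hu1,
      Finset.mem_union_left _ hv1, Finset.mem_union_right _ hu2, Finset.mem_union_right _ hv2,
      h1, h2, fun h => hd' hu1 (h ▸ hu2), fun h => hd' hu1 (h ▸ hv2),
      fun h => hd' hv1 (h ▸ hu2), fun h => hd' hv1 (h ▸ hv2)⟩
  -- pick x arcs with no internal edges
  have hcard : x ≤ (𝒜.arcs.filter fun A => ¬ P A).card := by
    have hsplit := Finset.card_filter_add_card_filter_not (s := 𝒜.arcs) (p := P)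
    omega
  obtain ⟨S, hSsub, hScard⟩ := Finset.exists_subset_card_eq hcard
  have hSarcs : ∀ A ∈ S, A ∈ 𝒜.arcs := fun A hA => (Finset.mem_filter.1 (hSsub hA)).1
  have hSnoP : ∀ A ∈ S, ¬ P A := fun A hA => (Finset.mem_filter.1 (hSsub hA)).2
  have hSlen : ∀ A ∈ S, 2 * x ≤ A.card := fun A hA => hlen A (hSarcs A hA)
  have hSdisj : ∀ A ∈ S, ∀ B ∈ S, A ≠ B → Disjoint A B :=
    fun A hA B hB hAB => hdisj A (hSarcs A hA) B (hSarcs B hB) hAB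
  obtain ⟨A0, hA0⟩ : S.Nonempty := Finset.card_pos.mp (by omega)
  obtain ⟨v0, _⟩ : A0.Nonempty := Finset.card_pos.mp (by have := hSlen A0 hA0; omega)
  -- the set of star centers
  set C : Finset V := S.biUnion (fun A => (S.erase A).image (fun B => starCtr G v0 A B))
    with hCdef
  have hctr : ∀ A ∈ S, ∀ B ∈ S, A ≠ B → ∀ u ∈ A, ∀ v ∈ B, G.Adj u v →
      u = starCtr G v0 A B ∨ v = starCtr G v0 A B := by
    intro A hA B hB hAB
    exact starCtr_spec G v0 (star_center G A B (hSdisj A hA B hB hAB)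
      (hM2 A (hSarcs A hA) B (hSarcs B hB) hAB) v0)
  have hctrC : ∀ A ∈ S, ∀ B ∈ S, A ≠ B → starCtr G v0 A B ∈ C := by
    intro A hA B hB hAB
    exact Finset.mem_biUnion.2 ⟨A, hA, Finset.mem_image.2
      ⟨B, Finset.mem_erase.2 ⟨Ne.symm hAB, hB⟩, rfl⟩⟩
  have hCcard : C.card ≤ x * (x - 1) := by
    calc C.card ≤ ∑ A ∈ S, ((S.erase A).image fun B => starCtr G v0 A B).card :=
          Finset.card_biUnion_le
      _ ≤ ∑ _A ∈ S, (x - 1) := Finset.sum_le_sum (fun A hA =>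
          le_trans Finset.card_image_le (by rw [Finset.card_erase_of_mem hA, hScard]))
      _ = x * (x - 1) := by rw [Finset.sum_const, hScard, smul_eq_mul]
  set U : Finset V := S.biUnion (fun A => A) with hUdef
  have hUcard : x * (2 * x) ≤ U.card := by
    rw [hUdef, Finset.card_biUnion (fun A hA B hB hAB => hSdisj A hA B hB hAB)]
    calc x * (2 * x) = ∑ _A ∈ S, 2 * x := by rw [Finset.sum_const, hScard, smul_eq_mul]
      _ ≤ ∑ A ∈ S, A.card := Finset.sum_le_sum (fun A hA => hSlen A hA)
  refine ⟨U \ C, ?_, ?_, ?_⟩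
  · intro v hv
    obtain ⟨A, hA, hvA⟩ := Finset.mem_biUnion.1 (Finset.mem_sdiff.1 hv).1
    exact ⟨A, hSarcs A hA, hvA⟩
  · intro u hu v hv huv hadj
    obtain ⟨hu1, hu2⟩ := Finset.mem_sdiff.1 hu
    obtain ⟨hv1, hv2⟩ := Finset.mem_sdiff.1 hv
    obtain ⟨A, hA, huA⟩ := Finset.mem_biUnion.1 hu1
    obtain ⟨B, hB, hvB⟩ := Finset.mem_biUnion.1 hv1
    by_cases hAB : A = B
    · subst hAB
      exact hSnoP A hA ⟨u, huA, v, hvB, hadj⟩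
    · rcases hctr A hA B hB hAB u huA v hvB hadj with h | h
      · exact hu2 (h ▸ hctrC A hA B hB hAB)
      · exact hv2 (h ▸ hctrC A hA B hB hAB)
  · have hsd : U.card ≤ (U \ C).card + C.card := Finset.card_le_card_sdiff_add_card
    have e2 : x * (x - 1) + x = x * x := by
      have h1 : x - 1 + 1 = x := by omega
      calc x * (x - 1) + x = x * (x - 1 + 1) := (Nat.mul_succ x (x - 1)).symm
        _ = x * x := by rw [h1]
    have e1 : x * (2 * x) = 2 * (x * x) := by ring
    have e3 : x ^ 2 = x * x := sq x
    rw [e3]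
    linarith
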